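/- Let ≥ be a quasi-ordering on simple types whose strict part > is well-founded, and which is arrow monotonic and arrow preserving. Then the relation ≥* defined as the reflexive-transitive closure of (≥ ∪ ⊳), where ⊳ is the strict subterm relation on types, is a quasi-ordering on types extending both ≥ and ⊳, whose strict part is well-founded, and whose associated equivalence coincides with the equivalence ≡ of ≥. -/

import Mathlib

inductive Ty (S : Type) : Type
  | sort : S → Ty S
  | arrow : Ty S → Ty S → Ty S

/-- `SubTy a b` : `a` is a strict subterm of the type `b`. -/
inductive SubTy {S : Type} : Ty S → Ty S → Prop
  | dom {τ σ} : SubTy τ (Ty.arrow τ σ)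
  | cod {τ σ} : SubTy σ (Ty.arrow τ σ)
  | domTrans {ρ τ σ} : SubTy ρ τ → SubTy ρ (Ty.arrow τ σ)
  | codTrans {ρ τ σ} : SubTy ρ σ → SubTy ρ (Ty.arrow τ σ)

namespace StmtAux

def tySize {S : Type} : Ty S → ℕ
  | .sort _ => 1
  | .arrow a b => tySize a + tySize b + 1

theorem subTy_size {S : Type} {a b : Ty S} (h : SubTy a b) : tySize a < tySize b := by
  induction h with
  | dom => simp [tySize]
  | cod => simp [tySize]
  | domTrans _ ih => simp [tySize]; omega
  | codTrans _ ih => simp [tySize]; omega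

section

variable {S : Type} (ge : Ty S → Ty S → Prop)

/-- one strict step : strict ≥ or strict subterm -/
def Q (x y : Ty S) : Prop := (ge x y ∧ ¬ ge y x) ∨ SubTy y x

/-- strict step modulo equivalence, oriented small-to-big:  `V x y` means `x` below `y`. -/
def V (x y : Ty S) : Prop :=
  (ge y x ∧ ¬ ge x y) ∨
    ∃ u v, (ge y u ∧ ge u y) ∧ SubTy v u ∧ (ge v x ∧ ge x v)

variable
    (hrefl : ∀ a, ge a a)
    (htrans : ∀ a b c, ge a b → ge b c → ge a c)
    (hmono : ∀ α τ σ, ge τ σ → ge (Ty.arrow α τ) (Ty.arrow α σ) ∧ ge (Ty.arrow τ α) (Ty.arrow σ α))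
    (hap : ∀ τ σ α, (ge (Ty.arrow τ σ) α ∧ ge α (Ty.arrow τ σ)) ↔
      ∃ τ' σ', α = Ty.arrow τ' σ' ∧ (ge τ' τ ∧ ge τ τ') ∧ (ge σ' σ ∧ ge σ σ'))

include hap in
theorem eqv_size : ∀ a b : Ty S, ge a b → ge b a → tySize a = tySize b := by
  intro a
  induction a with
  | sort s =>
    intro b h1 h2
    cases b with
    | sort t => rfl
    | arrow τ σ =>
      obtain ⟨τ', σ', heq, -, -⟩ := (hap τ σ (Ty.sort s)).mp ⟨h2, h1⟩
      cases heq
  | arrow τ σ ihτ ihσ =>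
    intro b h1 h2
    obtain ⟨τ', σ', heq, ⟨hτ1, hτ2⟩, ⟨hσ1, hσ2⟩⟩ := (hap τ σ b).mp ⟨h1, h2⟩
    subst heq
    simp [tySize, ihτ τ' hτ2 hτ1, ihσ σ' hσ2 hσ1]

include hap in
/-- subterms can be transferred along equivalence -/
theorem sub_eqv : ∀ {s t : Ty S}, SubTy s t → ∀ t', ge t t' → ge t' t →
    ∃ s', SubTy s' t' ∧ ge s s' ∧ ge s' s := by
  intro s t h
  induction h with
  | @dom τ σ =>
    intro t' h1 h2
    obtain ⟨τ', σ', heq, ⟨a1, a2⟩, -⟩ := (hap τ σ t').mp ⟨h1, h2⟩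
    subst heq
    exact ⟨τ', SubTy.dom, a2, a1⟩
  | @cod τ σ =>
    intro t' h1 h2
    obtain ⟨τ', σ', heq, -, ⟨b1, b2⟩⟩ := (hap τ σ t').mp ⟨h1, h2⟩
    subst heq
    exact ⟨σ', SubTy.cod, b2, b1⟩
  | @domTrans ρ τ σ hsub ih =>
    intro t' h1 h2
    obtain ⟨τ', σ', heq, ⟨a1, a2⟩, -⟩ := (hap τ σ t').mp ⟨h1, h2⟩
    subst heq
    obtain ⟨s', hs, e1, e2⟩ := ih τ' a2 a1
    exact ⟨s', SubTy.domTrans hs, e1, e2⟩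
  | @codTrans ρ τ σ hsub ih =>
    intro t' h1 h2
    obtain ⟨τ', σ', heq, -, ⟨b1, b2⟩⟩ := (hap τ σ t').mp ⟨h1, h2⟩
    subst heq
    obtain ⟨s', hs, e1, e2⟩ := ih σ' b2 b1
    exact ⟨s', SubTy.codTrans hs, e1, e2⟩

include hmono hap in
/-- a strict step below a subterm can be lifted to a strict step of the whole term -/
theorem sub_gt : ∀ {v u : Ty S}, SubTy v u → ∀ c, ge v c → ¬ ge c v →
    ∃ w, SubTy c w ∧ ge u w ∧ ¬ ge w u := by
  intro v u h
  induction h with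
  | @dom τ σ =>
    intro c h1 h2
    refine ⟨Ty.arrow c σ, SubTy.dom, (hmono σ τ c h1).2, ?_⟩
    intro hge
    obtain ⟨τ', σ', heq, ⟨a1, a2⟩, -⟩ :=
      (hap τ σ (Ty.arrow c σ)).mp ⟨(hmono σ τ c h1).2, hge⟩
    injection heq with e1 e2
    subst e1
    exact h2 a1
  | @cod τ σ =>
    intro c h1 h2
    refine ⟨Ty.arrow τ c, SubTy.cod, (hmono τ σ c h1).1, ?_⟩
    intro hge
    obtain ⟨τ', σ', heq, -, ⟨b1, b2⟩⟩ :=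
      (hap τ σ (Ty.arrow τ c)).mp ⟨(hmono τ σ c h1).1, hge⟩
    injection heq with e1 e2
    subst e2
    exact h2 b1
  | @domTrans ρ τ σ hsub ih =>
    intro c h1 h2
    obtain ⟨w', hw', g1, g2⟩ := ih c h1 h2
    refine ⟨Ty.arrow w' σ, SubTy.domTrans hw', (hmono σ τ w' g1).2, ?_⟩
    intro hge
    obtain ⟨τ', σ', heq, ⟨a1, a2⟩, -⟩ :=
      (hap τ σ (Ty.arrow w' σ)).mp ⟨(hmono σ τ w' g1).2, hge⟩
    injection heq with e1 e2
    subst e1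
    exact g2 a1
  | @codTrans ρ τ σ hsub ih =>
    intro c h1 h2
    obtain ⟨w', hw', g1, g2⟩ := ih c h1 h2
    refine ⟨Ty.arrow τ w', SubTy.codTrans hw', (hmono τ σ w' g1).1, ?_⟩
    intro hge
    obtain ⟨τ', σ', heq, -, ⟨b1, b2⟩⟩ :=
      (hap τ σ (Ty.arrow τ w')).mp ⟨(hmono τ σ w' g1).1, hge⟩
    injection heq with e1 e2
    subst e2
    exact g2 b1

include hrefl htrans hap in
/-- normalization: every (≥ ∪ ⊳)* chain is an equivalence, or a nonempty
strict chain followed by an equivalence -/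
theorem norm : ∀ a b : Ty S,
    Relation.ReflTransGen (fun x y => ge x y ∨ SubTy y x) a b →
    (ge a b ∧ ge b a) ∨ ∃ c, Relation.TransGen (Q ge) a c ∧ ge c b ∧ ge b c := by
  intro a b h
  induction h with
  | refl => exact Or.inl ⟨hrefl a, hrefl a⟩
  | @tail b c hab hbc ih =>
    rcases ih with ⟨e1, e2⟩ | ⟨d, tg, e1, e2⟩
    · rcases hbc with hge | hsub
      · by_cases h' : ge c b
        · exact Or.inl ⟨htrans a b c e1 hge, htrans c b a h' e2⟩
        · exact Or.inr ⟨c, Relation.TransGen.single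
            (Or.inl ⟨htrans a b c e1 hge, fun hc => h' (htrans c a b hc e1)⟩),
            hrefl c, hrefl c⟩
      · obtain ⟨c', hc', ec1, ec2⟩ := sub_eqv ge hap hsub a e2 e1
        exact Or.inr ⟨c', Relation.TransGen.single (Or.inr hc'), ec2, ec1⟩
    · rcases hbc with hge | hsub
      · by_cases h' : ge c b
        · exact Or.inr ⟨d, tg, htrans d b c e1 hge, htrans c b d h' e2⟩
        · exact Or.inr ⟨c, tg.tail
            (Or.inl ⟨htrans d b c e1 hge, fun hc => h' (htrans c d b hc e1)⟩),
            hrefl c, hrefl c⟩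
      · obtain ⟨c', hc', ec1, ec2⟩ := sub_eqv ge hap hsub d e2 e1
        exact Or.inr ⟨c', tg.tail (Or.inr hc'), ec2, ec1⟩

include hrefl htrans in
/-- convert a strict `Q`-chain (plus trailing equivalence) to a `V`-chain -/
theorem tgQ_to_V : ∀ {a c : Ty S}, Relation.TransGen (Q ge) a c →
    ∀ e, ge c e → ge e c → Relation.TransGen (V ge) e a := by
  have step : ∀ x c : Ty S, Q ge x c → ∀ e, ge c e → ge e c → V ge e x := by
    intro x c h e h1 h2
    rcases h with ⟨g1, g2⟩ | hsub
    · exact Or.inl ⟨htrans x c e g1 h1, fun hea => g2 (htrans c e x h1 hea)⟩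
    · exact Or.inr ⟨x, c, ⟨hrefl x, hrefl x⟩, hsub, ⟨h1, h2⟩⟩
  intro a c h
  induction h with
  | single h => intro e h1 h2; exact Relation.TransGen.single (step _ _ h e h1 h2)
  | @tail x c htg h ih =>
    intro e h1 h2
    exact Relation.TransGen.head (step _ _ h e h1 h2) (ih x (hrefl x) (hrefl x))

include htrans in
theorem V_absorb : ∀ {x y z : Ty S}, V ge x y → ge y z → ge z y → V ge x z := by
  intro x y z h hyz hzy
  rcases h with ⟨g1, g2⟩ | ⟨u, v, ⟨eu1, eu2⟩, hsub, ev⟩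
  · exact Or.inl ⟨htrans z y x hzy g1, fun hxz => g2 (htrans x z y hxz hzy)⟩
  · exact Or.inr ⟨u, v, ⟨htrans z y u hzy eu1, htrans u y z eu2 hyz⟩, hsub, ev⟩

include htrans in
theorem tgV_absorb : ∀ {a b c : Ty S}, Relation.TransGen (V ge) a b →
    ge b c → ge c b → Relation.TransGen (V ge) a c := by
  intro a b c h
  induction h with
  | single h => intro h1 h2; exact Relation.TransGen.single (V_absorb ge htrans h h1 h2)
  | tail htg h ih =>
    intro h1 h2
    exact Relation.TransGen.tail htg (V_absorb ge htrans h h1 h2)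

end

/-- union of two well-founded relations quasi-commuting over each other is well-founded -/
theorem wf_union {α : Type} {A B : α → α → Prop} (hA : WellFounded A) (hB : WellFounded B)
    (comm : ∀ a b c, B b a → A c b → ∃ w, A w a ∧ B c w) :
    WellFounded (fun b a => A b a ∨ B b a) := by
  set U := fun b a => A b a ∨ B b a with hU
  have main : ∀ a, (∀ b, A b a → Acc U b) → Acc U a := by
    intro a
    induction a using hB.induction with
    | _ a ihB =>
      intro hAacc
      constructor
      intro b hb
      rcases hb with h | h
      · exact hAacc b h
      · refine ihB b h ?_
        intro c hc
        obtain ⟨w, hw1, hw2⟩ := comm a b c h hc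
        exact (hAacc w hw1).inv (Or.inr hw2)
  constructor
  intro a
  induction a using hA.induction with
  | _ a ih => exact main a ih

end StmtAux

theorem stmt1 {S : Type} (ge : Ty S → Ty S → Prop)
    (hrefl : ∀ a, ge a a)
    (htrans : ∀ a b c, ge a b → ge b c → ge a c)
    -- the strict part of ≥ is well-founded
    (hwf : WellFounded (fun b a => ge a b ∧ ¬ ge b a))
    -- arrow monotonicity
    (hmono : ∀ α τ σ, ge τ σ → ge (Ty.arrow α τ) (Ty.arrow α σ) ∧ ge (Ty.arrow τ α) (Ty.arrow σ α))
    -- arrow preservation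
    (hap : ∀ τ σ α, (ge (Ty.arrow τ σ) α ∧ ge α (Ty.arrow τ σ)) ↔
      ∃ τ' σ', α = Ty.arrow τ' σ' ∧ (ge τ' τ ∧ ge τ τ') ∧ (ge σ' σ ∧ ge σ σ'))
    -- ≥* is the reflexive-transitive closure of (≥ ∪ ⊳)
    (geS : Ty S → Ty S → Prop)
    (hgeS : ∀ a b, geS a b ↔ Relation.ReflTransGen (fun x y => ge x y ∨ SubTy y x) a b) :
    -- ≥* is a quasi-ordering
    (∀ a, geS a a) ∧ (∀ a b c, geS a b → geS b c → geS a c) ∧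
    -- extending ≥ and ⊳
    (∀ a b, ge a b → geS a b) ∧ (∀ a b, SubTy b a → geS a b) ∧
    -- whose strict part is well-founded
    WellFounded (fun b a => geS a b ∧ ¬ geS b a) ∧
    -- and whose equivalence coincides with the equivalence of ≥
    (∀ a b, (geS a b ∧ geS b a) ↔ (ge a b ∧ ge b a)) := by
  -- well-foundedness of V
  have hBwf : WellFounded (fun (x y : Ty S) =>
      ∃ u v, (ge y u ∧ ge u y) ∧ SubTy v u ∧ (ge v x ∧ ge x v)) := by
    have hsz : WellFounded (fun (x y : Ty S) => StmtAux.tySize x < StmtAux.tySize y) :=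
      InvImage.wf StmtAux.tySize Nat.lt_wfRel.wf
    refine Subrelation.wf ?_ hsz
    rintro x y ⟨u, v, ⟨eu1, eu2⟩, hsub, ⟨ev1, ev2⟩⟩
    have h1 := StmtAux.eqv_size ge hap y u eu1 eu2
    have h2 := StmtAux.eqv_size ge hap v x ev1 ev2
    have h3 := StmtAux.subTy_size hsub
    show StmtAux.tySize x < StmtAux.tySize y
    omega
  have comm : ∀ a b c : Ty S,
      (∃ u v, (ge a u ∧ ge u a) ∧ SubTy v u ∧ (ge v b ∧ ge b v)) →
      (ge b c ∧ ¬ ge c b) →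
      ∃ w, (ge a w ∧ ¬ ge w a) ∧ ∃ u v, (ge w u ∧ ge u w) ∧ SubTy v u ∧ (ge v c ∧ ge c v) := by
    rintro a b c ⟨u, v, ⟨ea1, ea2⟩, hsub, ⟨ev1, ev2⟩⟩ ⟨g1, g2⟩
    have hvc : ge v c := htrans v b c ev1 g1
    have hncv : ¬ ge c v := fun h => g2 (htrans c v b h ev1)
    obtain ⟨w, hcw, guw, gnwu⟩ := StmtAux.sub_gt ge hmono hap hsub c hvc hncv
    refine ⟨w, ⟨htrans a u w ea1 guw, fun h => gnwu (htrans w a u h ea1)⟩,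
      w, c, ⟨hrefl w, hrefl w⟩, hcw, ⟨hrefl c, hrefl c⟩⟩
  have hVwf : WellFounded (StmtAux.V ge) := by
    have := StmtAux.wf_union
      (A := fun x y => ge y x ∧ ¬ ge x y)
      (B := fun x y => ∃ u v, (ge y u ∧ ge u y) ∧ SubTy v u ∧ (ge v x ∧ ge x v))
      hwf hBwf (fun a b c hb ha => comm a b c hb ha)
    exact this
  have hVTwf : WellFounded (Relation.TransGen (StmtAux.V ge)) := hVwf.transGen
  refine ⟨?_, ?_, ?_, ?_, ?_, ?_⟩
  · intro a; exact (hgeS a a).mpr Relation.ReflTransGen.refl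
  · intro a b c h1 h2
    exact (hgeS a c).mpr (((hgeS a b).mp h1).trans ((hgeS b c).mp h2))
  · intro a b h; exact (hgeS a b).mpr (Relation.ReflTransGen.single (Or.inl h))
  · intro a b h; exact (hgeS a b).mpr (Relation.ReflTransGen.single (Or.inr h))
  · refine Subrelation.wf ?_ hVTwf
    rintro b a ⟨h1, h2⟩
    rcases StmtAux.norm ge hrefl htrans hap a b ((hgeS a b).mp h1) with ⟨e1, e2⟩ | ⟨c, tg, e1, e2⟩
    · exact absurd ((hgeS b a).mpr (Relation.ReflTransGen.single (Or.inl e2))) h2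
    · exact StmtAux.tgQ_to_V ge hrefl htrans tg b e1 e2
  · intro a b
    constructor
    · rintro ⟨h1, h2⟩
      rcases StmtAux.norm ge hrefl htrans hap a b ((hgeS a b).mp h1) with ⟨e1, e2⟩ | ⟨c, tg1, e1, e2⟩
      · exact ⟨e1, e2⟩
      rcases StmtAux.norm ge hrefl htrans hap b a ((hgeS b a).mp h2) with ⟨f1, f2⟩ | ⟨d, tg2, f1, f2⟩
      · exact ⟨f2, f1⟩
      have t1 : Relation.TransGen (StmtAux.V ge) b a :=
        StmtAux.tgQ_to_V ge hrefl htrans tg1 b e1 e2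
      have t2 : Relation.TransGen (StmtAux.V ge) a b :=
        StmtAux.tgQ_to_V ge hrefl htrans tg2 a f1 f2
      exact absurd (t2.trans t1) (hVTwf.isIrrefl.irrefl _)
    · rintro ⟨g1, g2⟩
      exact ⟨(hgeS a b).mpr (Relation.ReflTransGen.single (Or.inl g1)),
        (hgeS b a).mpr (Relation.ReflTransGen.single (Or.inl g2))⟩
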